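/- (Discrete Gronwall-type uniform bound) Let (y_M)_{M≥0} be a sequence of nonnegative reals, let 0 < r < 1, K₁, K₂ ≥ 0 and K₃ > 0 satisfy r·(1 + K₃) < 1, and suppose that for all M ≥ 0, r^{-M} y_M ≤ K₁ + K₂ r^{-M} + K₃ Σ_{i=0}^{M−1} r^{-i} y_i. Then for all M ≥ 0, y_M ≤ K₁ + K₂ + K₂K₃ r / (1 − r(1+K₃)). -/

import Mathlib

/-- (Discrete Gronwall-type uniform bound) If `0 < r < 1`,
`K₁, K₂ ≥ 0`, `K₃ > 0` with `r(1+K₃) < 1`, and the nonnegative sequence `(y_M)`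
satisfies `r^{-M} y_M ≤ K₁ + K₂ r^{-M} + K₃ Σ_{i<M} r^{-i} y_i` for all `M`, then
`y_M ≤ K₁ + K₂ + K₂ K₃ r / (1 − r(1+K₃))` for all `M`. -/
theorem stmt6 (y : ℕ → ℝ) (hy : ∀ M, 0 ≤ y M) (r K₁ K₂ K₃ : ℝ)
    (hr0 : 0 < r) (hr1 : r < 1) (hK₁ : 0 ≤ K₁) (hK₂ : 0 ≤ K₂) (hK₃ : 0 < K₃)
    (hrK : r * (1 + K₃) < 1)
    (hrec : ∀ M, (r ^ M)⁻¹ * y M ≤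
      K₁ + K₂ * (r ^ M)⁻¹ + K₃ * ∑ i ∈ Finset.range M, (r ^ i)⁻¹ * y i) :
    ∀ M, y M ≤ K₁ + K₂ + K₂ * K₃ * r / (1 - r * (1 + K₃)) := by
  have hq1 : 0 < 1 - r * (1 + K₃) := by linarith
  set S : ℕ → ℝ := fun M => ∑ i ∈ Finset.range M, (r ^ i)⁻¹ * y i with hS
  have hSnn : ∀ M, 0 ≤ S M := fun M => Finset.sum_nonneg (fun i _ => mul_nonneg (by positivity) (hy i))
  set A : ℝ := K₂ * r / (1 - r * (1 + K₃)) with hA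
  have hAnn : 0 ≤ A := by rw [hA]; positivity
  have hAeq : (1 - r * (1 + K₃)) * A = K₂ * r := by
    rw [hA]; field_simp [hq1.ne']
  have key : ∀ M, K₃ * (r ^ M * S M) ≤ K₁ * (1 - r ^ M) + K₃ * A := by
    intro M
    induction M with
    | zero => simp [hS]; positivity
    | succ n ih =>
      have hrn : (0:ℝ) < r ^ n := pow_pos hr0 n
      have hstep : S (n+1) = S n + (r ^ n)⁻¹ * y n := by
        simp [hS, Finset.sum_range_succ]
      have h1 := hrec n
      have h2 : r ^ (n+1) * S (n+1) ≤ r * (1 + K₃) * (r ^ n * S n) + K₁ * r ^ (n+1) + K₂ * r := by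
        rw [hstep]
        have hmul : r ^ (n+1) * (S n + (r ^ n)⁻¹ * y n) ≤
            r ^ (n+1) * (S n + (K₁ + K₂ * (r ^ n)⁻¹ + K₃ * S n)) := by
          apply mul_le_mul_of_nonneg_left (by linarith) (by positivity)
        refine hmul.trans_eq ?_
        field_simp
        ring
      have h3 : K₃ * (r ^ (n+1) * S (n+1)) ≤
          r * (1 + K₃) * (K₃ * (r ^ n * S n)) + K₃ * K₁ * r ^ (n+1) + K₃ * K₂ * r := by
        nlinarith [mul_le_mul_of_nonneg_left h2 hK₃.le]
      have h4 : r * (1 + K₃) * (K₃ * (r ^ n * S n)) ≤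
          r * (1 + K₃) * (K₁ * (1 - r ^ n) + K₃ * A) :=
        mul_le_mul_of_nonneg_left ih (by positivity)
      have h5 : K₁ * (r * (1 + K₃)) ≤ K₁ * 1 := mul_le_mul_of_nonneg_left hrK.le hK₁
      have h6 : K₃ * ((1 - r * (1 + K₃)) * A) = K₃ * (K₂ * r) := by rw [hAeq]
      have hrpow : r ^ (n+1) = r * r ^ n := by ring
      nlinarith [h3, h4, h5, h6, mul_nonneg (mul_nonneg hK₁ hr0.le) hrn.le,
        mul_nonneg (mul_nonneg (mul_nonneg hK₁ hr0.le) hK₃.le) hrn.le]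
  intro M
  have h1 := hrec M
  have hrM : (0:ℝ) < r ^ M := pow_pos hr0 M
  have hrM1 : r ^ M ≤ 1 := pow_le_one₀ hr0.le hr1.le
  have h2 : y M ≤ r ^ M * K₁ + K₂ + K₃ * (r ^ M * S M) := by
    have hmul : r ^ M * ((r ^ M)⁻¹ * y M) ≤
        r ^ M * (K₁ + K₂ * (r ^ M)⁻¹ + K₃ * S M) := by
      apply mul_le_mul_of_nonneg_left h1 hrM.le
    have hl : r ^ M * ((r ^ M)⁻¹ * y M) = y M := by field_simp
    have hrr : r ^ M * (K₁ + K₂ * (r ^ M)⁻¹ + K₃ * S M)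
        = r ^ M * K₁ + K₂ + K₃ * (r ^ M * S M) := by field_simp
    rw [hl, hrr] at hmul
    exact hmul
  have h3 := key M
  have h5 : K₂ * K₃ * r / (1 - r * (1 + K₃)) = K₃ * A := by rw [hA]; ring
  have h6 : 0 ≤ K₁ * r ^ M := mul_nonneg hK₁ hrM.le
  rw [h5]
  nlinarith [h2, h3, h6, mul_le_mul_of_nonneg_left h2 hK₃.le]
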